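/- Let $f$ be convex and continuous, $X$ compact, $Z$ a linear subspace, $\rho>0$, and suppose $\omega^*$ is optimal for $\max_{\omega\in Z^\perp}\phi^C(\omega)$ with optimal value $\zeta^{CLD}$. Then $\min_{x\in\operatorname{conv}(X),z\in Z}L_\rho(x,z,\omega^*)=\zeta^{CLD}$, and any minimizer $(x^*,z^*)$ of $L_\rho(\cdot,\cdot,\omega^*)$ over $\operatorname{conv}(X)\times Z$ satisfies $Qx^*=z^*$ and is optimal for $\min\{f(x):Qx=z,\,x\in\operatorname{conv}(X),\,z\in Z\}$. -/

import Mathlib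

open RealInnerProductSpace

noncomputable def phiC {n q : ℕ} (f : EuclideanSpace ℝ (Fin n) → ℝ)
    (Q : EuclideanSpace ℝ (Fin n) →ₗ[ℝ] EuclideanSpace ℝ (Fin q))
    (X : Set (EuclideanSpace ℝ (Fin n))) (ω : EuclideanSpace ℝ (Fin q)) : ℝ :=
  sInf {r : ℝ | ∃ x ∈ convexHull ℝ X, r = f x + ⟪ω, Q x⟫}

noncomputable def augL {n q : ℕ} (f : EuclideanSpace ℝ (Fin n) → ℝ)
    (Q : EuclideanSpace ℝ (Fin n) →ₗ[ℝ] EuclideanSpace ℝ (Fin q)) (ρ : ℝ)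
    (x : EuclideanSpace ℝ (Fin n)) (z ω : EuclideanSpace ℝ (Fin q)) : ℝ :=
  f x + ⟪ω, Q x⟫ + ρ / 2 * ‖Q x - z‖ ^ 2

/-- Auxiliary: extending a sum over `Fin k` by zeros to `Fin m`. -/
lemma aux_dite_sum {M : Type*} [AddCommMonoid M] {k m : ℕ} (hk : k ≤ m) (F : Fin k → M) :
    (∑ i : Fin m, if h : (i : ℕ) < k then F ⟨i, h⟩ else 0) = ∑ j : Fin k, F j := by
  have h1 : (∑ i : Fin m, if h : (i : ℕ) < k then F ⟨i, h⟩ else 0)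
      = ∑ i ∈ Finset.range m, (if h : i < k then F ⟨i, h⟩ else 0) :=
    Fin.sum_univ_eq_sum_range (fun i => if h : i < k then F ⟨i, h⟩ else 0) m
  have h2 : (∑ i ∈ Finset.range k, if h : i < k then F ⟨i, h⟩ else 0) = ∑ j : Fin k, F j := by
    rw [← Fin.sum_univ_eq_sum_range (fun i => if h : i < k then F ⟨i, h⟩ else 0) k]
    refine Finset.sum_congr rfl fun j _ => ?_
    rw [dif_pos j.isLt]
  rw [h1, ← h2]
  rw [← Finset.sum_subset (Finset.range_subset_range.mpr hk)]
  intro i _ hi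
  rw [Finset.mem_range] at hi
  rw [dif_neg hi]

/-- Carathéodory: the convex hull of a compact set in `EuclideanSpace ℝ (Fin m)` is compact. -/
lemma isCompact_convexHull_fd {m : ℕ} {X : Set (EuclideanSpace ℝ (Fin m))}
    (hX : IsCompact X) (hne : X.Nonempty) : IsCompact (convexHull ℝ X) := by
  classical
  obtain ⟨x₀, hx₀⟩ := hne
  let φ : (Fin (m + 1) → ℝ) × (Fin (m + 1) → EuclideanSpace ℝ (Fin m)) → EuclideanSpace ℝ (Fin m) := fun p => ∑ i, p.1 i • p.2 i
  have hφ : Continuous φ := continuous_finset_sum _ fun i _ =>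
    ((continuous_apply i).comp continuous_fst).smul ((continuous_apply i).comp continuous_snd)
  have hD : IsCompact ((stdSimplex ℝ (Fin (m + 1))) ×ˢ
      (Set.univ.pi fun _ : Fin (m + 1) => X)) :=
    (isCompact_stdSimplex (𝕜 := ℝ) (ι := Fin (m + 1))).prod (isCompact_univ_pi fun _ => hX)
  have himg : convexHull ℝ X =
      φ '' ((stdSimplex ℝ (Fin (m + 1))) ×ˢ (Set.univ.pi fun _ : Fin (m + 1) => X)) := by
    apply Set.Subset.antisymm
    · intro x hx
      obtain ⟨ι, hι, z, w, hrange, hai, hwpos, hwsum, hsum⟩ :=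
        eq_pos_convex_span_of_mem_convexHull hx
      letI := hι
      have hk : Fintype.card ι ≤ m + 1 := by
        refine hai.card_le_finrank_succ.trans ?_
        have h1 : Module.finrank ℝ (vectorSpan ℝ (Set.range z)) ≤ Module.finrank ℝ (EuclideanSpace ℝ (Fin m)) :=
          Submodule.finrank_le _
        have h2 : Module.finrank ℝ (EuclideanSpace ℝ (Fin m)) = m := finrank_euclideanSpace_fin
        omega
      set k := Fintype.card ι with hkdef
      let σ : ι ≃ Fin k := Fintype.equivFin ι
      let wv : Fin (m + 1) → ℝ := fun i => if h : (i : ℕ) < k then w (σ.symm ⟨i, h⟩) else 0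
      let vv : Fin (m + 1) → EuclideanSpace ℝ (Fin m) := fun i => if h : (i : ℕ) < k then z (σ.symm ⟨i, h⟩) else x₀
      refine ⟨(wv, vv), ⟨⟨fun i => ?_, ?_⟩, fun i _ => ?_⟩, ?_⟩
      · by_cases h : (i : ℕ) < k
        · simp only [wv, dif_pos h]; exact (hwpos _).le
        · simp only [wv, dif_neg h]; exact le_refl 0
      · show (∑ i, wv i) = 1
        have : (∑ i, wv i) = ∑ j : Fin k, w (σ.symm j) :=
          aux_dite_sum hk (fun j => w (σ.symm j))
        rw [this, ← hwsum]
        exact Equiv.sum_comp σ.symm w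
      · by_cases h : (i : ℕ) < k
        · simp only [vv, dif_pos h]; exact hrange (Set.mem_range_self _)
        · simp only [vv, dif_neg h]; exact hx₀
      · show (∑ i, wv i • vv i) = x
        have h1 : ∀ i : Fin (m + 1), wv i • vv i =
            if h : (i : ℕ) < k then w (σ.symm ⟨i, h⟩) • z (σ.symm ⟨i, h⟩) else 0 := by
          intro i
          by_cases h : (i : ℕ) < k
          · simp only [wv, vv, dif_pos h]
          · simp only [wv, vv, dif_neg h, zero_smul]
        rw [Finset.sum_congr rfl fun i _ => h1 i,
          aux_dite_sum hk (fun j => w (σ.symm j) • z (σ.symm j)), ← hsum]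
        exact Equiv.sum_comp σ.symm (fun i => w i • z i)
    · rintro x ⟨⟨wv, vv⟩, ⟨⟨hw0, hw1⟩, hv⟩, rfl⟩
      exact (convex_convexHull ℝ X).sum_mem (fun i _ => hw0 i) hw1
        (fun i _ => subset_convexHull ℝ X (hv i (Set.mem_univ i)))
  rw [himg]
  exact hD.image hφ

/-- Attainment of the infimum of a continuous function on a compact nonempty set. -/
lemma aux_attains {m : ℕ} {K : Set (EuclideanSpace ℝ (Fin m))} (hK : IsCompact K)
    (hne : K.Nonempty) {h : EuclideanSpace ℝ (Fin m) → ℝ} (hc : Continuous h) :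
    ∃ x₀ ∈ K, (∀ x ∈ K, h x₀ ≤ h x) ∧ sInf {r | ∃ x ∈ K, r = h x} = h x₀ := by
  obtain ⟨x₀, hx₀K, hmin⟩ := hK.exists_isMinOn hne hc.continuousOn
  have hmin' : ∀ x ∈ K, h x₀ ≤ h x := fun x hx => hmin hx
  refine ⟨x₀, hx₀K, hmin', ?_⟩
  have hset : {r | ∃ x ∈ K, r = h x} = h '' K := by
    ext r; constructor
    · rintro ⟨x, hx, rfl⟩; exact ⟨x, hx, rfl⟩
    · rintro ⟨x, hx, rfl⟩; exact ⟨x, hx, rfl⟩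
  rw [hset]
  refine IsLeast.csInf_eq ⟨⟨x₀, hx₀K, rfl⟩, ?_⟩
  rintro r ⟨x, hx, rfl⟩
  exact hmin' x hx

theorem stmt2 (n q : ℕ) (f : EuclideanSpace ℝ (Fin n) → ℝ)
    (hf : ConvexOn ℝ Set.univ f) (hfc : Continuous f)
    (Q : EuclideanSpace ℝ (Fin n) →ₗ[ℝ] EuclideanSpace ℝ (Fin q))
    (X : Set (EuclideanSpace ℝ (Fin n))) (hX : IsCompact X) (hXne : X.Nonempty)
    (Z : Submodule ℝ (EuclideanSpace ℝ (Fin q))) (ρ : ℝ) (hρ : 0 < ρ)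
    (ωstar : EuclideanSpace ℝ (Fin q)) (hωs : ωstar ∈ Zᗮ)
    (hopt : ∀ ω ∈ Zᗮ, phiC f Q X ω ≤ phiC f Q X ωstar)
    (ζ : ℝ) (hζ : ζ = phiC f Q X ωstar) :
    sInf {r : ℝ | ∃ x ∈ convexHull ℝ X, ∃ z ∈ Z, r = augL f Q ρ x z ωstar} = ζ ∧
    ∀ xstar ∈ convexHull ℝ X, ∀ zstar ∈ Z,
      (∀ x ∈ convexHull ℝ X, ∀ z ∈ Z, augL f Q ρ xstar zstar ωstar ≤ augL f Q ρ x z ωstar) →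
      Q xstar = zstar ∧
        (∀ x ∈ convexHull ℝ X, ∀ z ∈ Z, Q x = z → f xstar ≤ f x) := by
  classical
  set K := convexHull ℝ X with hKdef
  have hKcomp : IsCompact K := isCompact_convexHull_fd hX hXne
  have hKne : K.Nonempty := hXne.mono (subset_convexHull ℝ X)
  have hKconv : Convex ℝ K := convex_convexHull ℝ X
  have hQc : Continuous Q := Q.continuous_of_finiteDimensional
  set g : EuclideanSpace ℝ (Fin q) → EuclideanSpace ℝ (Fin n) → ℝ :=
    fun ω x => f x + ⟪ω, Q x⟫ with hgdef
  have hgc : ∀ ω, Continuous (g ω) := fun ω => hfc.add (continuous_const.inner hQc)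
  -- phiC attained
  have hphi : ∀ ω, ∃ x₀ ∈ K, (∀ x ∈ K, g ω x₀ ≤ g ω x) ∧ phiC f Q X ω = g ω x₀ := by
    intro ω
    obtain ⟨x₀, h1, h2, h3⟩ := aux_attains hKcomp hKne (hgc ω)
    exact ⟨x₀, h1, h2, h3⟩
  obtain ⟨x₀, hx₀K, hx₀min, hx₀val⟩ := hphi ωstar
  have hζval : ∀ x ∈ K, ζ ≤ g ωstar x := by
    intro x hx
    rw [hζ, hx₀val]
    exact hx₀min x hx
  have hgx₀ : g ωstar x₀ = ζ := by rw [hζ, hx₀val]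
  -- inner product with elements of Z vanishes
  have hinner0 : ∀ z ∈ Z, ⟪ωstar, z⟫ = 0 := by
    intro z hz
    rw [real_inner_comm]
    exact (Submodule.mem_orthogonal Z ωstar).mp hωs z hz
  -- the argmin set S
  set S : Set (EuclideanSpace ℝ (Fin n)) := {x ∈ K | g ωstar x ≤ ζ} with hSdef
  have hSsub : S ⊆ K := fun x hx => hx.1
  have hSne : S.Nonempty := ⟨x₀, hx₀K, hgx₀.le⟩
  have hScomp : IsCompact S := by
    have : S = K ∩ {x | g ωstar x ≤ ζ} := rfl
    rw [this]
    exact hKcomp.inter_right (isClosed_le (hgc ωstar) continuous_const)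
  have hSconv : Convex ℝ S := by
    have hconvg : ConvexOn ℝ K (g ωstar) := by
      refine ConvexOn.add (hf.subset (Set.subset_univ K) hKconv) ?_
      exact LinearMap.convexOn (((innerSL ℝ ωstar).toLinearMap).comp Q) hKconv
    exact hconvg.convex_le ζ
  -- Key claim: there is x̄ ∈ S with Q x̄ ∈ Z
  have hfeas : ∃ xb ∈ S, Q xb ∈ Z := by
    set P : EuclideanSpace ℝ (Fin q) →L[ℝ] EuclideanSpace ℝ (Fin q) :=
      (Zᗮ).subtypeL.comp (Zᗮ.orthogonalProjectionOnto) with hPdef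
    have hPmem : ∀ y, P y ∈ Zᗮ := fun y => (Zᗮ.orthogonalProjectionOnto y).2
    have hPsub : ∀ y : EuclideanSpace ℝ (Fin q), y - P y ∈ Z := by
      intro y
      have := Submodule.sub_starProjection_mem_orthogonal (K := Zᗮ) y
      rwa [Submodule.orthogonal_orthogonal] at this
    have hPinner : ∀ u ∈ Zᗮ, ∀ y, ⟪u, P y⟫ = ⟪u, y⟫ := by
      intro u hu y
      have h0 : ⟪u, y - P y⟫ = 0 := by
        rw [real_inner_comm]
        exact (Submodule.mem_orthogonal Z u).mp hu _ (hPsub y)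
      rw [inner_sub_right, sub_eq_zero] at h0
      exact h0.symm
    set T : Set (EuclideanSpace ℝ (Fin q)) := (fun x => P (Q x)) '' S with hTdef
    have hTne : T.Nonempty := hSne.image _
    have hTcomp : IsCompact T := hScomp.image (P.continuous.comp hQc)
    have hTconv : Convex ℝ T := hSconv.linear_image ((P.toLinearMap).comp Q)
    have hTZperp : ∀ y ∈ T, y ∈ Zᗮ := by
      rintro y ⟨x, _, rfl⟩; exact hPmem _
    by_cases h0 : (0 : EuclideanSpace ℝ (Fin q)) ∈ T
    · obtain ⟨xb, hxbS, hxb0⟩ := h0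
      refine ⟨xb, hxbS, ?_⟩
      have h2 := hPsub (Q xb)
      have h3 : P (Q xb) = 0 := hxb0
      rw [h3, sub_zero] at h2
      exact h2
    · exfalso
      obtain ⟨u, huT, hdist⟩ :=
        exists_norm_eq_iInf_of_complete_convex hTne hTcomp.isComplete hTconv 0
      have hsep : ∀ y ∈ T, ⟪(0 : EuclideanSpace ℝ (Fin q)) - u, y - u⟫ ≤ 0 :=
        (norm_eq_iInf_iff_real_inner_le_zero hTconv huT).mp hdist
      have hu0 : u ≠ 0 := fun h => h0 (h ▸ huT)
      have hδpos : (0 : ℝ) < ⟪u, u⟫ := by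
        rw [real_inner_self_eq_norm_sq]
        have hn : ‖u‖ ≠ 0 := norm_ne_zero_iff.mpr hu0
        positivity
      have hsep' : ∀ y ∈ T, ⟪u, u⟫ ≤ ⟪u, y⟫ := by
        intro y hy
        have h := hsep y hy
        rw [zero_sub, inner_sub_right] at h
        simp only [inner_neg_left] at h
        linarith
      have huZ : u ∈ Zᗮ := hTZperp u huT
      have hkey : ∀ x ∈ S, ⟪u, u⟫ ≤ ⟪u, Q x⟫ := by
        intro x hx
        have h1 : ⟪u, P (Q x)⟫ = ⟪u, Q x⟫ := hPinner u huZ (Q x)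
        rw [← h1]
        exact hsep' _ ⟨x, hx, rfl⟩
      -- the perturbation sequence
      set t : ℕ → ℝ := fun k => 1 / ((k : ℝ) + 1) with htdef
      have htpos : ∀ k, 0 < t k := fun k => by positivity
      have hωk : ∀ k : ℕ, ωstar + t k • u ∈ Zᗮ := fun k =>
        Zᗮ.add_mem hωs (Zᗮ.smul_mem _ huZ)
      have hgeq : ∀ (k : ℕ) (x : EuclideanSpace ℝ (Fin n)),
          g (ωstar + t k • u) x = g ωstar x + t k * ⟪u, Q x⟫ := by
        intro k x
        simp only [hgdef]
        rw [inner_add_left, real_inner_smul_left]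
        ring
      have hxk : ∀ k : ℕ, ∃ x ∈ K, g ωstar x + t k * ⟪u, Q x⟫ ≤ ζ := by
        intro k
        obtain ⟨xk, hxkK, _, hxkval⟩ := hphi (ωstar + t k • u)
        refine ⟨xk, hxkK, ?_⟩
        rw [← hgeq k xk, ← hxkval, hζ]
        exact hopt _ (hωk k)
      choose xk hxkK hxkle using hxk
      obtain ⟨xb, hxbK, ψ, hψmono, hψconv⟩ := hKcomp.tendsto_subseq hxkK
      have htlim : Filter.Tendsto (fun k => t (ψ k)) Filter.atTop (nhds 0) :=
        tendsto_one_div_add_atTop_nhds_zero_nat.comp hψmono.tendsto_atTop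
      have hAlim : Filter.Tendsto (fun k => g ωstar (xk (ψ k))) Filter.atTop
          (nhds (g ωstar xb)) := ((hgc ωstar).tendsto xb).comp hψconv
      have hBc : Continuous fun x : EuclideanSpace ℝ (Fin n) => ⟪u, Q x⟫ :=
        continuous_const.inner hQc
      have hBlim : Filter.Tendsto (fun k => ⟪u, Q (xk (ψ k))⟫) Filter.atTop
          (nhds ⟪u, Q xb⟫) := (hBc.tendsto xb).comp hψconv
      have hxbS : xb ∈ S := by
        refine ⟨hxbK, ?_⟩
        have hlim : Filter.Tendsto
            (fun k => g ωstar (xk (ψ k)) + t (ψ k) * ⟪u, Q (xk (ψ k))⟫) Filter.atTop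
            (nhds (g ωstar xb + 0 * ⟪u, Q xb⟫)) := hAlim.add (htlim.mul hBlim)
        have := le_of_tendsto hlim (Filter.Eventually.of_forall fun k => hxkle (ψ k))
        rwa [zero_mul, add_zero] at this
      have hposb : (0 : ℝ) < ⟪u, Q xb⟫ := lt_of_lt_of_le hδpos (hkey xb hxbS)
      have hev : ∀ᶠ k in Filter.atTop, (0 : ℝ) < ⟪u, Q (xk (ψ k))⟫ :=
        hBlim.eventually (eventually_gt_nhds hposb)
      obtain ⟨k, hk⟩ := hev.exists
      have h1 : ζ ≤ g ωstar (xk (ψ k)) := hζval _ (hxkK (ψ k))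
      have h2 : 0 < t (ψ k) * ⟪u, Q (xk (ψ k))⟫ := mul_pos (htpos _) hk
      linarith [hxkle (ψ k)]
  obtain ⟨xb, hxbS, hxbZ⟩ := hfeas
  have hgxb : g ωstar xb = ζ := le_antisymm hxbS.2 (hζval xb hxbS.1)
  have hinnerxb : ⟪ωstar, Q xb⟫ = 0 := hinner0 _ hxbZ
  have hfxb : f xb = ζ := by
    have : g ωstar xb = f xb + ⟪ωstar, Q xb⟫ := rfl
    rw [this, hinnerxb, add_zero] at hgxb
    exact hgxb
  have haugxb : augL f Q ρ xb (Q xb) ωstar = ζ := by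
    simp only [augL, sub_self, norm_zero]
    rw [hinnerxb, hfxb]
    ring
  have hlb : ∀ x ∈ K, ∀ z ∈ Z, ζ ≤ augL f Q ρ x z ωstar := by
    intro x hx z _
    have h1 : ζ ≤ g ωstar x := hζval x hx
    have h2 : 0 ≤ ρ / 2 * ‖Q x - z‖ ^ 2 := by positivity
    simp only [augL]
    have : g ωstar x = f x + ⟪ωstar, Q x⟫ := rfl
    linarith [this ▸ h1]
  constructor
  · refine IsLeast.csInf_eq ⟨⟨xb, hxbS.1, Q xb, hxbZ, haugxb.symm⟩, ?_⟩
    rintro r ⟨x, hx, z, hz, rfl⟩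
    exact hlb x hx z hz
  · intro xstar hxs zstar hzs hminL
    have h1 : augL f Q ρ xstar zstar ωstar ≤ ζ := by
      have := hminL xb hxbS.1 (Q xb) hxbZ
      rwa [haugxb] at this
    have h2 : ζ ≤ f xstar + ⟪ωstar, Q xstar⟫ := hζval xstar hxs
    have h3 : 0 ≤ ρ / 2 * ‖Q xstar - zstar‖ ^ 2 := by positivity
    have haug : augL f Q ρ xstar zstar ωstar
        = f xstar + ⟪ωstar, Q xstar⟫ + ρ / 2 * ‖Q xstar - zstar‖ ^ 2 := rfl
    have hzero : ρ / 2 * ‖Q xstar - zstar‖ ^ 2 = 0 := by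
      rw [haug] at h1; linarith
    have hQz : Q xstar = zstar := by
      have hρ2 : ρ / 2 ≠ 0 := by positivity
      have hsq := (mul_eq_zero.mp hzero).resolve_left hρ2
      have hn : ‖Q xstar - zstar‖ = 0 :=
        (pow_eq_zero_iff (by norm_num : (2:ℕ) ≠ 0)).mp hsq
      exact sub_eq_zero.mp (norm_eq_zero.mp hn)
    refine ⟨hQz, ?_⟩
    have hinnerstar : ⟪ωstar, Q xstar⟫ = 0 := by rw [hQz]; exact hinner0 _ hzs
    have hfstar : f xstar ≤ ζ := by
      rw [haug, hzero, hinnerstar] at h1; linarith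
    intro x hx z hz hQxz
    have : ζ ≤ f x + ⟪ωstar, Q x⟫ := hζval x hx
    have hiz : ⟪ωstar, Q x⟫ = 0 := by rw [hQxz]; exact hinner0 _ hz
    rw [hiz, add_zero] at this
    linarith
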